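/- arXiv:1603.06236 — 4 statements merged into one kernel-verified Lean document; each statement's English description precedes it below -/
import Mathlib

section
/- If a nonempty word w over an alphabet A has maximal border ε (i.e. no nonempty proper prefix of w is also a suffix of w), then for every k ≥ 0, the language Count(w, k) of words containing exactly k occurrences of w as a contiguous subword equals [Count(w,0) · w]^k · Count(w,0), where · denotes language concatenation. -/
/-- Number of occurrences of `w` as a contiguous subword (factor) of `v`. -/
def countOcc {α : Type*} [DecidableEq α] (w v : List α) : ℕ :=
  ((List.range (v.length + 1)).filter (fun i => decide (w <+: v.drop i))).length

/-- `Count w k`: the language of words containing exactly `k` occurrences of `w`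
as a contiguous subword. -/
def Count {α : Type*} [DecidableEq α] (w : List α) (k : ℕ) : Language α :=
  {v | countOcc w v = k}

namespace Stmt4Aux

variable {α : Type*} [DecidableEq α]

lemma prefix_append_left {x a b : List α} (h : x <+: a ++ b) (hl : x.length ≤ a.length) :
    x <+: a := by
  obtain ⟨r, hr⟩ := h
  have h2 : (a ++ b).take x.length = x := by
    rw [← hr, List.take_append_of_le_length (by simp), List.take_length]
  rw [List.take_append_of_le_length hl] at h2
  rw [← h2]; exact List.take_prefix _ _

lemma prefix_of_prefix_append {u s w : List α} (h : w <+: u ++ s) (hl : u.length ≤ w.length) :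
    u <+: w := by
  obtain ⟨r, hr⟩ := h
  have h2 : (w ++ r).take u.length = u := by rw [hr, List.take_left]
  rw [List.take_append_of_le_length hl] at h2
  rw [← h2]; exact List.take_prefix _ _

lemma countOcc_eq_zero_iff {w v : List α} (hw : w ≠ []) :
    countOcc w v = 0 ↔ ∀ i, ¬ w <+: v.drop i := by
  unfold countOcc
  rw [List.length_eq_zero_iff, List.filter_eq_nil_iff]
  constructor
  · intro h i hi
    by_cases hle : i ≤ v.length
    · exact h i (List.mem_range.mpr (by omega)) (by simpa using hi)
    · have : v.drop i = [] := List.drop_eq_nil_of_le (by omega)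
      rw [this] at hi
      exact hw (List.prefix_nil.mp hi)
  · intro h i _ hi
    exact h i (by simpa using hi)

lemma no_overlap {w : List α} (hw : w ≠ [])
    (hborder : ∀ u : List α, u <+: w → u <:+ w → u ≠ w → u = [])
    {v : List α} {i j : ℕ} (hi : w <+: v.drop i) (hj : w <+: v.drop j)
    (hij : i < j) (hj2 : j < i + w.length) : False := by
  obtain ⟨s, hs⟩ := hi
  set d := j - i with hd
  have hdrop : v.drop j = w.drop d ++ s := by
    have : v.drop j = (v.drop i).drop d := by rw [List.drop_drop]; congr 1; omega
    rw [this, ← hs, List.drop_append_of_le_length (by omega)]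
  rw [hdrop] at hj
  set u := w.drop d with hu
  have hulen : u.length = w.length - d := by simp [hu]
  have hupre : u <+: w := prefix_of_prefix_append hj (by omega)
  have husuf : u <:+ w := List.drop_suffix _ _
  have hune : u ≠ w := by
    intro h
    have := congrArg List.length h
    rw [hulen] at this
    omega
  have := hborder u hupre husuf hune
  have := congrArg List.length this
  rw [hulen] at this
  simp at this
  omega

lemma countOcc_append (w u z : List α) :
    countOcc w (u ++ z) =
      ((List.range u.length).filter (fun i => decide (w <+: (u ++ z).drop i))).length
        + countOcc w z := by
  unfold countOcc
  have h1 : (u ++ z).length + 1 = u.length + (z.length + 1) := by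
    rw [List.length_append]; omega
  rw [h1, List.range_add, List.filter_append, List.length_append]
  congr 1
  rw [List.filter_map, List.length_map]
  congr 1
  apply List.filter_congr
  intro i hi
  have h2 : (u ++ z).drop (u.length + i) = z.drop i := List.drop_length_add_append i
  simp [Function.comp, h2]

lemma countOcc_cat {w : List α} (hw : w ≠ [])
    (hborder : ∀ u : List α, u <+: w → u <:+ w → u ≠ w → u = [])
    (u t : List α) (hu : countOcc w u = 0) :
    countOcc w (u ++ w ++ t) = countOcc w t + 1 := by
  have hwlen : 1 ≤ w.length := List.length_pos_iff.mpr hw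
  have hocc : w <+: (u ++ w ++ t).drop u.length := by
    rw [List.append_assoc, List.drop_left]
    exact ⟨t, rfl⟩
  have hnone : ∀ i, i ≠ u.length → i < u.length + w.length →
      ¬ w <+: (u ++ w ++ t).drop i := by
    intro i hne hlt hpre
    by_cases hcase : i + w.length ≤ u.length
    · -- occurrence inside u
      have hdrop : (u ++ w ++ t).drop i = u.drop i ++ (w ++ t) := by
        rw [List.append_assoc, List.drop_append_of_le_length (by omega)]
      rw [hdrop] at hpre
      have : w <+: u.drop i := prefix_append_left hpre (by simp; omega)
      exact (countOcc_eq_zero_iff hw).mp hu i this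
    · rcases Nat.lt_or_ge i u.length with h | h
      · exact no_overlap hw hborder hpre hocc h (by omega)
      · have : u.length < i := by omega
        exact no_overlap hw hborder hocc hpre this (by omega)
  rw [countOcc_append w (u ++ w) t]
  have hsplit : (u ++ w).length = (u.length + 1) + (w.length - 1) := by
    rw [List.length_append]; omega
  rw [hsplit, List.range_add, List.filter_append, List.length_append]
  have hr1 : u.length + 1 = u.length + 1 := rfl
  have e1 : ((List.range (u.length + 1)).filter
      (fun i => decide (w <+: (u ++ w ++ t).drop i))).length = 1 := by
    rw [List.range_add, List.filter_append, List.length_append]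
    have ha : ((List.range u.length).filter
        (fun i => decide (w <+: (u ++ w ++ t).drop i))) = [] := by
      rw [List.filter_eq_nil_iff]
      intro i hi
      simp only [decide_eq_true_eq]
      exact hnone i (by have := List.mem_range.mp hi; omega)
        (by have := List.mem_range.mp hi; omega)
    have hb : ((List.range 1).map (fun x => u.length + x)).filter
        (fun i => decide (w <+: (u ++ w ++ t).drop i)) = [u.length] := by
      have hm : (List.range 1).map (fun x => u.length + x) = [u.length] := by
        simp [List.range_succ]
      rw [hm, List.filter_cons, if_pos (by simpa using hocc), List.filter_nil]
    rw [ha, hb]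
    simp
  have e2 : (((List.range (w.length - 1)).map (fun x => u.length + 1 + x)).filter
      (fun i => decide (w <+: (u ++ w ++ t).drop i))).length = 0 := by
    simp only [List.length_eq_zero_iff, List.filter_eq_nil_iff]
    intro i hi
    simp only [List.mem_map, List.mem_range] at hi
    obtain ⟨x, hx, rfl⟩ := hi
    simp only [decide_eq_true_eq]
    exact hnone _ (by omega) (by omega)
  rw [e1, e2]
  omega

lemma exists_decomp {w : List α} (hw : w ≠ [])
    (hborder : ∀ u : List α, u <+: w → u <:+ w → u ≠ w → u = [])
    {v : List α} {k : ℕ} (h : countOcc w v = k + 1) :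
    ∃ u t, v = u ++ w ++ t ∧ countOcc w u = 0 ∧ countOcc w t = k := by
  have hex : ∃ i, w <+: v.drop i := by
    by_contra hc
    push_neg at hc
    rw [(countOcc_eq_zero_iff hw).mpr hc] at h
    omega
  classical
  set i := Nat.find hex with hi
  have hfi : w <+: v.drop i := Nat.find_spec hex
  obtain ⟨t, ht⟩ := hfi
  set u := v.take i with hu
  have hilen : i ≤ v.length := by
    by_contra hc
    have : v.drop i = [] := List.drop_eq_nil_of_le (by omega)
    rw [this] at ht
    exact hw (by cases w <;> simp_all)
  have hulen : u.length = i := by simp [hu]; omega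
  have hv : v = u ++ w ++ t := by
    rw [List.append_assoc, ht, hu, List.take_append_drop]
  have hu0 : countOcc w u = 0 := by
    rw [countOcc_eq_zero_iff hw]
    intro j hj
    have hjlt : j < i := by
      have hne : u.drop j ≠ [] := by
        intro hnil; rw [hnil] at hj; exact hw (List.prefix_nil.mp hj)
      have : j < u.length := by
        by_contra hc
        exact hne (List.drop_eq_nil_of_le (by omega))
      omega
    have : w <+: v.drop j := by
      have hdrop : v.drop j = u.drop j ++ (w ++ t) := by
        rw [hv, List.append_assoc, List.drop_append_of_le_length (by omega)]
      rw [hdrop]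
      exact hj.trans (List.prefix_append _ _)
    exact Nat.find_min hex hjlt this
  refine ⟨u, t, hv, hu0, ?_⟩
  rw [hv, countOcc_cat hw hborder u t hu0] at h
  omega

end Stmt4Aux

theorem stmt4 {α : Type*} [DecidableEq α] (w : List α) (hw : w ≠ [])
    (hborder : ∀ u : List α, u <+: w → u <:+ w → u ≠ w → u = []) (k : ℕ) :
    Count w k = (Count w 0 * ({w} : Language α)) ^ k * Count w 0 := by
  induction k with
  | zero => rw [pow_zero, one_mul]
  | succ k ih =>
    ext v
    constructor
    · intro h
      have h' : countOcc w v = k + 1 := h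
      obtain ⟨u, t, rfl, hu, ht⟩ := Stmt4Aux.exists_decomp hw hborder h'
      rw [pow_succ', mul_assoc]
      refine Language.mem_mul.mpr ⟨u ++ w, Language.mem_mul.mpr ⟨u, hu, w, rfl, rfl⟩,
        t, ?_, by rw [List.append_assoc]⟩
      rw [← ih]
      exact ht
    · intro h
      rw [pow_succ', mul_assoc] at h
      obtain ⟨x, hx, y, hy, rfl⟩ := Language.mem_mul.mp h
      obtain ⟨u, hu, b, hb, hxe⟩ := Language.mem_mul.mp hx
      have hb' : b = w := hb
      subst b
      subst hxe
      rw [← ih] at hy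
      have hy' : countOcc w y = k := hy
      show countOcc w (u ++ w ++ y) = k + 1
      rw [Stmt4Aux.countOcc_cat hw hborder u y hu, hy']
end

section
/- If a nonempty word w over an alphabet A has maximal border ε, then for every integer n ≥ 2 and 0 ≤ k < n, the language ModCount(w, k, n) of words v with |v|_w ≡ k (mod n) equals [Count(w,0)·w]^k · ([Count(w,0)·w]^n)* · Count(w,0). -/
section Aux

variable {α : Type*} [DecidableEq α]

lemma countOcc_eq_sum (w v : List α) :
    countOcc w v = ∑ i ∈ Finset.range (v.length + 1), (if w <+: v.drop i then 1 else 0) := by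
  unfold countOcc
  rw [← List.countP_eq_length_filter]
  generalize v.length + 1 = N
  induction N with
  | zero => simp
  | succ n ih =>
    rw [List.range_succ, List.countP_append, Finset.sum_range_succ, ih]
    simp [List.countP, List.countP.go]

lemma prefix_append_left {w a b : List α} (h : w <+: a ++ b) (hlen : w.length ≤ a.length) :
    w <+: a := by
  rw [List.prefix_iff_eq_take] at h ⊢
  rwa [List.take_append_of_le_length hlen] at h

lemma no_overlap (w : List α) (hw : w ≠ [])
    (hb : ∀ u : List α, u <+: w → u <:+ w → u ≠ w → u = [])
    {l : List α} (h1 : w <+: l) {t : ℕ} (ht0 : 0 < t) (ht : t < w.length)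
    (h2 : w <+: l.drop t) : False := by
  obtain ⟨r, hr⟩ := h1
  have hd : l.drop t = w.drop t ++ r := by
    rw [← hr, List.drop_append_of_le_length (le_of_lt ht)]
  rw [hd] at h2
  have hpre : w.drop t <+: w :=
    List.prefix_of_prefix_length_le (List.prefix_append _ _) h2 (by simp)
  have hsuf : w.drop t <:+ w := List.drop_suffix t w
  have hne : w.drop t ≠ w := by
    intro h
    have := congrArg List.length h
    simp [List.length_drop] at this
    omega
  have hnil : w.drop t = [] := hb _ hpre hsuf hne
  have := congrArg List.length hnil
  simp [List.length_drop] at this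
  omega

lemma countOcc_append (w : List α) (hw : w ≠ [])
    (hb : ∀ u : List α, u <+: w → u <:+ w → u ≠ w → u = []) (u v : List α) :
    countOcc w (u ++ w ++ v) = countOcc w u + 1 + countOcc w v := by
  have hwpos : 0 < w.length := List.length_pos_iff.mpr hw
  rw [List.append_assoc]
  set s := u ++ (w ++ v) with hs
  have hmid : w <+: s.drop u.length := by
    rw [hs, List.drop_left]; exact List.prefix_append w v
  have hlen : s.length + 1 = u.length + (w.length + (v.length + 1)) := by
    simp [hs, List.length_append]; omega
  rw [countOcc_eq_sum w s, hlen, Finset.sum_range_add, Finset.sum_range_add]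
  have hA : ∑ i ∈ Finset.range u.length, (if w <+: s.drop i then (1 : ℕ) else 0)
      = countOcc w u := by
    rw [countOcc_eq_sum w u, Finset.sum_range_succ]
    have h0 : (if w <+: u.drop u.length then (1 : ℕ) else 0) = 0 := by
      rw [List.drop_length, if_neg]
      intro h; exact hw (List.prefix_nil.mp h)
    rw [h0, add_zero]
    refine Finset.sum_congr rfl fun i hi => ?_
    rw [Finset.mem_range] at hi
    have hiff : (w <+: s.drop i) ↔ (w <+: u.drop i) := by
      constructor
      · intro h
        by_cases hcase : i + w.length ≤ u.length
        · have hdi : s.drop i = u.drop i ++ (w ++ v) :=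
            List.drop_append_of_le_length (by omega)
          rw [hdi] at h
          exact prefix_append_left h (by rw [List.length_drop]; omega)
        · exfalso
          refine no_overlap w hw hb h (t := u.length - i) (by omega) (by omega) ?_
          rw [List.drop_drop]
          have he : i + (u.length - i) = u.length := by omega
          rw [he]; exact hmid
      · intro h
        have hdi : s.drop i = u.drop i ++ (w ++ v) :=
          List.drop_append_of_le_length (by omega)
        rw [hdi]
        exact h.trans (List.prefix_append _ _)
    simp [hiff]
  have hB : ∑ i ∈ Finset.range w.length, (if w <+: s.drop (u.length + i) then (1 : ℕ) else 0)
      = 1 := by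
    rw [Finset.sum_eq_single_of_mem 0 (Finset.mem_range.mpr hwpos)]
    · rw [add_zero, if_pos hmid]
    · intro i hi hne
      rw [if_neg]
      intro h
      refine no_overlap w hw hb hmid (t := i) (Nat.pos_of_ne_zero hne)
        (Finset.mem_range.mp hi) ?_
      rwa [List.drop_drop]
  have hC : ∑ i ∈ Finset.range (v.length + 1),
      (if w <+: s.drop (u.length + (w.length + i)) then (1 : ℕ) else 0) = countOcc w v := by
    rw [countOcc_eq_sum w v]
    refine Finset.sum_congr rfl fun i _ => ?_
    have hd : s.drop (u.length + (w.length + i)) = v.drop i := by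
      rw [hs, List.drop_append, List.drop_append]
      simp
      rw [List.drop_eq_nil_of_le (by omega), List.drop_eq_nil_of_le (by omega)]
      rfl
    rw [hd]
  rw [hA, hB, hC]; omega

lemma count_eq_pow (w : List α) (hw : w ≠ [])
    (hb : ∀ u : List α, u <+: w → u <:+ w → u ≠ w → u = []) (m : ℕ) :
    Count w m = (Count w 0 * ({w} : Language α)) ^ m * Count w 0 := by
  induction m with
  | zero => rw [pow_zero, one_mul]
  | succ m ih =>
    ext v
    rw [pow_succ', mul_assoc, ← ih]
    constructor
    · intro hv
      have hv' : countOcc w v = m + 1 := hv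
      have hex : ∃ i, w <+: v.drop i := by
        by_contra h
        push_neg at h
        have : countOcc w v = 0 := by
          unfold countOcc
          rw [List.length_eq_zero_iff, List.filter_eq_nil_iff]
          intro a _
          simpa using h a
        omega
      set i₀ := Nat.find hex with hi0
      obtain ⟨r, hr⟩ := Nat.find_spec hex
      have hsplit : v = v.take i₀ ++ (w ++ r) := by
        rw [hr, List.take_append_drop]
      have ha : countOcc w (v.take i₀) = 0 := by
        unfold countOcc
        rw [List.length_eq_zero_iff, List.filter_eq_nil_iff]
        intro j _
        simp only [decide_eq_true_eq]
        intro hpre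
        have hne : (v.take i₀).drop j ≠ [] := by
          intro h
          exact hw (List.prefix_nil.mp (h ▸ hpre))
        have hj' : j < i₀ := by
          by_contra hc
          push_neg at hc
          apply hne
          rw [List.drop_eq_nil_iff]
          rw [List.length_take]
          omega
        have hvj : w <+: v.drop j := by
          refine hpre.trans ?_
          rw [List.drop_take]
          exact List.take_prefix _ _
        exact Nat.find_min hex hj' hvj
      have hcr : countOcc w r = m := by
        have hcnt := countOcc_append w hw hb (v.take i₀) r
        rw [List.append_assoc, ← hsplit, hv', ha] at hcnt
        omega
      refine Language.mem_mul.mpr ⟨v.take i₀ ++ w,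
        Language.mem_mul.mpr ⟨v.take i₀, ha, w, rfl, rfl⟩, r, hcr, ?_⟩
      rw [List.append_assoc, ← hsplit]
    · intro hv
      obtain ⟨x, hx, r, hrC, rfl⟩ := Language.mem_mul.mp hv
      obtain ⟨a, haC, b, hbw, rfl⟩ := Language.mem_mul.mp hx
      have hbw' : b = w := hbw
      have haC' : countOcc w a = 0 := haC
      have hrC' : countOcc w r = m := hrC
      show countOcc w (a ++ b ++ r) = m + 1
      rw [hbw', countOcc_append w hw hb a r, haC', hrC']; omega

lemma mem_kstar_pow {L : Language α} {x : List α} :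
    x ∈ KStar.kstar L ↔ ∃ m, x ∈ L ^ m := by
  rw [Language.kstar_eq_iSup_pow]
  exact Language.mem_iSup

end Aux

theorem stmt5 {α : Type*} [DecidableEq α] (w : List α) (hw : w ≠ [])
    (hborder : ∀ u : List α, u <+: w → u <:+ w → u ≠ w → u = [])
    (n k : ℕ) (hn : 2 ≤ n) (hk : k < n) :
    {v | countOcc w v % n = k}
      = (Count w 0 * ({w} : Language α)) ^ k
          * KStar.kstar ((Count w 0 * ({w} : Language α)) ^ n) * Count w 0 := by
  have key : ∀ j : ℕ,
      (Count w 0 * ({w} : Language α)) ^ k * ((Count w 0 * ({w} : Language α)) ^ n) ^ j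
        * Count w 0 = Count w (k + n * j) := by
    intro j
    rw [← pow_mul, ← pow_add, ← count_eq_pow w hw hborder]
  ext v
  simp only [Set.mem_setOf_eq]
  constructor
  · intro h
    have hj : countOcc w v = k + n * (countOcc w v / n) := by
      conv_lhs => rw [← Nat.mod_add_div (countOcc w v) n]
      rw [h]
    set j := countOcc w v / n
    have hv : v ∈ (Count w 0 * ({w} : Language α)) ^ k
        * ((Count w 0 * ({w} : Language α)) ^ n) ^ j * Count w 0 := by
      rw [key j]; exact hj
    obtain ⟨ab, hab, c, hc, rfl⟩ := Language.mem_mul.mp hv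
    obtain ⟨a, ha, b, hb, rfl⟩ := Language.mem_mul.mp hab
    exact Language.mem_mul.mpr ⟨a ++ b,
      Language.mem_mul.mpr ⟨a, ha, b, mem_kstar_pow.mpr ⟨j, hb⟩, rfl⟩, c, hc, rfl⟩
  · intro h
    obtain ⟨ab, hab, c, hc, rfl⟩ := Language.mem_mul.mp h
    obtain ⟨a, ha, b, hb, rfl⟩ := Language.mem_mul.mp hab
    obtain ⟨j, hj⟩ := mem_kstar_pow.mp hb
    have hv : a ++ b ++ c ∈ (Count w 0 * ({w} : Language α)) ^ k
        * ((Count w 0 * ({w} : Language α)) ^ n) ^ j * Count w 0 :=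
      Language.mem_mul.mpr ⟨a ++ b, Language.mem_mul.mpr ⟨a, ha, b, hj, rfl⟩, c, hc, rfl⟩
    rw [key j] at hv
    have hv' : countOcc w (a ++ b ++ c) = k + n * j := hv
    rw [hv', Nat.add_mul_mod_self_left, Nat.mod_eq_of_lt hk]
end

section
/- Let A be an alphabet with at least two letters, a ∈ A, B = A \ {a}, r ≥ 1, and k ≥ 1. Let W = B ∪ (B · Count(a^r, 0) · B), and let CountPS(a^r, k) denote the set of words v with |v|_{a^r} = k which have a^r both as a prefix and as a suffix. Then CountPS(a^r, k) = ⋃_{j=1}^{k} ⋃ { a^{k₁} W a^{k₂} W ⋯ W a^{k_j} : k₁,…,k_j ≥ r, k₁+⋯+k_j = k + (r-1)j }. -/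
/-- `CountPS w k`: words with exactly `k` occurrences of `w` as a factor,
having `w` both as a prefix and as a suffix. -/
def CountPS {α : Type*} [DecidableEq α] (w : List α) (k : ℕ) : Language α :=
  {v | countOcc w v = k ∧ w <+: v ∧ w <:+ v}

/-- The language of single letters distinct from `a` (the buffers). -/
def buffer {α : Type*} (a : α) : Language α := {l | ∃ b : α, b ≠ a ∧ l = [b]}

/-- The wedge language `W = B ⊔ B·Count(aʳ,0)·B`. -/
def wedge {α : Type*} [DecidableEq α] (a : α) (r : ℕ) : Language α :=
  buffer a ⊔ buffer a * Count (List.replicate r a) 0 * buffer a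

/-- `altLang a W [k₁,…,k_j]` is the language `a^{k₁} W a^{k₂} W ⋯ W a^{k_j}`. -/
def altLang {α : Type*} (a : α) (W : Language α) : List ℕ → Language α
  | [] => 1
  | [k] => {List.replicate k a}
  | k :: ks => ({List.replicate k a} : Language α) * W * altLang a W ks


namespace Stmt8Aux

variable {α : Type*} [DecidableEq α] {a b : α} {r : ℕ}

lemma repl_prefix_append_cons (hb : b ≠ a) (d z : List α) :
    List.replicate r a <+: d ++ b :: z ↔ List.replicate r a <+: d := by
  induction r generalizing d with
  | zero => simp
  | succ r ih =>
    cases d with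
    | nil =>
      simp only [List.replicate_succ, List.nil_append, List.cons_prefix_cons]
      constructor
      · rintro ⟨h, -⟩; exact absurd h.symm hb
      · rintro h; exact absurd h.length_le (by simp)
    | cons c d =>
      simp only [List.replicate_succ, List.cons_append, List.cons_prefix_cons, ih]

lemma repl_prefix_replicate (m : ℕ) :
    List.replicate r a <+: List.replicate m a ↔ r ≤ m := by
  constructor
  · intro h; simpa using h.length_le
  · intro h
    exact ⟨List.replicate (m - r) a, by rw [← List.replicate_add]; congr 1; omega⟩

lemma length_filter_range_lt (c N : ℕ) :
    ((List.range N).filter (fun i => decide (i < c))).length = min c N := by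
  induction N with
  | zero => simp
  | succ N ih =>
    rw [List.range_succ, List.filter_append, List.length_append, ih]
    by_cases h : N < c <;> simp [h] <;> omega

lemma countOcc_replicate (hr : 1 ≤ r) (m : ℕ) :
    countOcc (List.replicate r a) (List.replicate m a) = m + 1 - r := by
  unfold countOcc
  rw [List.length_replicate]
  rw [List.filter_congr (q := fun i => decide (i < m + 1 - r))
    (fun i hi => by
      simp only [List.mem_range] at hi
      simp only [List.drop_replicate, repl_prefix_replicate, decide_eq_decide]
      omega)]
  rw [length_filter_range_lt]; omega

lemma countOcc_cons (w : List α) (c : α) (v : List α) :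
    countOcc w (c :: v) = (if w <+: c :: v then 1 else 0) + countOcc w v := by
  unfold countOcc
  rw [show (c :: v).length + 1 = (v.length + 1) + 1 from by simp [Nat.add_comm]]
  rw [List.range_succ_eq_map, List.filter_cons]
  by_cases h : w <+: c :: v <;>
    simp [h, List.filter_map, Function.comp_def, Nat.add_comm]

lemma countOcc_append_cons (hb : b ≠ a) (hr : 1 ≤ r) (x y : List α) :
    countOcc (List.replicate r a) (x ++ b :: y)
      = countOcc (List.replicate r a) x + countOcc (List.replicate r a) y := by
  unfold countOcc
  rw [show (x ++ b :: y).length + 1 = (x.length + 1) + (y.length + 1) from by simp; omega]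
  rw [List.range_add, List.filter_append, List.length_append]
  congr 1
  · apply congrArg
    apply List.filter_congr
    intro i hi
    simp only [List.mem_range] at hi
    rw [List.drop_append_of_le_length (by omega)]
    simp only [decide_eq_decide]
    exact repl_prefix_append_cons hb _ _
  · rw [List.filter_map, List.length_map]
    apply congrArg
    apply List.filter_congr
    intro j hj
    simp only [Function.comp_apply, decide_eq_decide]
    rw [show x.length + 1 + j = x.length + (1 + j) from by omega, List.drop_append]
    simp [Nat.add_comm 1 j]
    rw [List.drop_eq_nil_of_le (by omega), List.nil_append]

lemma countOcc_eq_zero_iff {w : List α} (hw : w ≠ []) (v : List α) :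
    countOcc w v = 0 ↔ ∀ i, ¬ w <+: v.drop i := by
  unfold countOcc
  rw [List.length_eq_zero_iff, List.filter_eq_nil_iff]
  constructor
  · intro h i hi
    have hlen : i < v.length := by
      have h1 := hi.length_le
      rw [List.length_drop] at h1
      rcases Nat.eq_zero_or_pos w.length with h0 | h0
      · exact absurd (List.length_eq_zero_iff.mp h0) hw
      · omega
    exact absurd (by simpa using hi) (by simpa using h i (List.mem_range.mpr (by omega)))
  · intro h i _ hi
    exact absurd (of_decide_eq_true hi) (h i)

lemma countOcc_pos {w : List α} (hw : w ≠ []) {v : List α} (h : ∃ i, w <+: v.drop i) :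
    1 ≤ countOcc w v := by
  by_contra hc
  have h0 : countOcc w v = 0 := by omega
  obtain ⟨i, hi⟩ := h
  exact (countOcc_eq_zero_iff hw v).mp h0 i hi

lemma countOcc_append_left_zero {w : List α} :
    ∀ s t : List α, (∀ j < s.length, ¬ w <+: (s ++ t).drop j) →
      countOcc w (s ++ t) = countOcc w t := by
  intro s
  induction s with
  | nil => simp
  | cons c s ih =>
    intro t h
    rw [List.cons_append, countOcc_cons, if_neg (by simpa using h 0 (by simp))]
    rw [Nat.zero_add]
    apply ih
    intro j hj
    have := h (j + 1) (by simpa using hj)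
    simpa using this

end Stmt8Aux

namespace Stmt8Aux

variable {α : Type*} [DecidableEq α] {a b : α} {r : ℕ}

lemma altLang_single (W : Language α) (m : ℕ) :
    altLang a W [m] = ({List.replicate m a} : Language α) := rfl

lemma altLang_cons (W : Language α) (m m2 : ℕ) (ks : List ℕ) :
    altLang a W (m :: m2 :: ks)
      = ({List.replicate m a} : Language α) * W * altLang a W (m2 :: ks) := rfl

lemma altLang_subset (hr : 1 ≤ r) :
    ∀ ks : List ℕ, ks ≠ [] → (∀ x ∈ ks, r ≤ x) →
    ∀ v ∈ altLang a (wedge a r) ks,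
      countOcc (List.replicate r a) v + (r - 1) * ks.length = ks.sum
        ∧ List.replicate r a <+: v ∧ List.replicate r a <:+ v := by
  intro ks
  induction ks with
  | nil => simp
  | cons m ks ih =>
    intro _ hge v hv
    cases ks with
    | nil =>
      rw [altLang_single] at hv
      have hv' : v = List.replicate m a := hv
      subst hv'
      have hm : r ≤ m := hge m (by simp)
      refine ⟨?_, (repl_prefix_replicate m).mpr hm, ?_⟩
      · rw [countOcc_replicate hr]; simp; omega
      · exact ⟨List.replicate (m - r) a, by rw [← List.replicate_add]; congr 1; omega⟩
    | cons m2 ks2 =>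
      rw [altLang_cons, Language.mem_mul] at hv
      obtain ⟨p, hp, t, ht, hpt⟩ := hv
      rw [Language.mem_mul] at hp
      obtain ⟨x, hx, w, hw, hxw⟩ := hp
      have hx' : x = List.replicate m a := hx
      subst hx'
      have hm : r ≤ m := hge m (by simp)
      obtain ⟨hcnt, hpre, hsuf⟩ := ih (by simp) (fun x hx => hge x (by simp [hx])) t ht
      have key : countOcc (List.replicate r a) v
          = countOcc (List.replicate r a) (List.replicate m a)
            + countOcc (List.replicate r a) t := by
        rcases hw with hw | hw
        · obtain ⟨b, hb, rfl⟩ := hw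
          rw [← hpt, ← hxw,
            show (List.replicate m a ++ [b]) ++ t = List.replicate m a ++ b :: t from by simp]
          exact countOcc_append_cons hb hr _ _
        · change w ∈ (buffer a * Count (List.replicate r a) 0 * buffer a : Language α) at hw
          rw [Language.mem_mul] at hw
          obtain ⟨p1, hp1, c1, hc1, h1⟩ := hw
          rw [Language.mem_mul] at hp1
          obtain ⟨b1, hb1, u, hu, h2⟩ := hp1
          obtain ⟨b, hb, rfl⟩ := hb1
          obtain ⟨c, hc, rfl⟩ := hc1
          have hu0 : countOcc (List.replicate r a) u = 0 := hu
          rw [← hpt, ← hxw, ← h1, ← h2,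
            show (List.replicate m a ++ (([b] ++ u) ++ [c])) ++ t
              = List.replicate m a ++ b :: (u ++ c :: t) from by simp,
            countOcc_append_cons hb hr, countOcc_append_cons hc hr, hu0, Nat.zero_add]
      refine ⟨?_, ?_, ?_⟩
      · rw [key, countOcc_replicate hr]
        simp only [List.sum_cons, List.length_cons] at hcnt ⊢
        rw [Nat.mul_add, Nat.mul_one]
        generalize (r - 1) * (m2 :: ks2).length = G at hcnt ⊢
        omega
      · rw [← hpt, ← hxw]
        exact ((repl_prefix_replicate m).mpr hm).trans
          ((List.prefix_append _ _).trans (List.prefix_append _ _))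
      · rw [← hpt]
        exact hsuf.trans (List.suffix_append _ _)

end Stmt8Aux

namespace Stmt8Aux

variable {α : Type*} [DecidableEq α] {a b : α} {r : ℕ}

lemma subset_altLang (hr : 1 ≤ r) :
    ∀ n, ∀ v : List α, v.length ≤ n → ∀ k, 1 ≤ k →
      countOcc (List.replicate r a) v = k →
      List.replicate r a <+: v → List.replicate r a <:+ v →
      ∃ ks : List ℕ, ks ≠ [] ∧ ks.length ≤ k ∧ (∀ x ∈ ks, r ≤ x) ∧
        ks.sum = k + (r - 1) * ks.length ∧ v ∈ altLang a (wedge a r) ks := by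
  have hne_repl : (List.replicate r a : List α) ≠ [] :=
    List.ne_nil_of_length_pos (by simp; omega)
  intro n
  induction n with
  | zero =>
    intro v hv k hk hcnt hpre hsuf
    have hnil : v = [] := List.length_eq_zero_iff.mp (Nat.le_zero.mp hv)
    subst hnil
    have := hpre.length_le
    simp at this
    omega
  | succ n ih =>
    intro v hv k hk hcnt hpre hsuf
    set p : α → Bool := fun c => decide (c = a) with hp
    set m := (v.takeWhile p).length with hm
    have htw : v.takeWhile p = List.replicate m a := by
      apply List.eq_replicate_of_mem
      intro c hc
      have := List.mem_takeWhile_imp hc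
      simpa [hp] using this
    have hsplit : List.replicate m a ++ v.dropWhile p = v := by
      rw [← htw]; exact List.takeWhile_append_dropWhile
    cases hd : v.dropWhile p with
    | nil =>
      have hv' : v = List.replicate m a := by rw [← hsplit, hd, List.append_nil]
      have hrm : r ≤ m := by
        rw [hv'] at hpre; exact (repl_prefix_replicate m).mp hpre
      refine ⟨[m], by simp, by simpa using hk, by simpa using hrm, ?_, ?_⟩
      · rw [hv', countOcc_replicate hr] at hcnt
        simp; omega
      · rw [altLang_single]; exact hv'
    | cons b t =>
      have hb : b ≠ a := by
        have h0 := List.head_dropWhile_not p (l := v) (by rw [hd]; simp)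
        simp only [hd, List.head_cons] at h0
        simpa [hp] using h0
      have hv2 : v = List.replicate m a ++ b :: t := by rw [← hsplit, hd]
      have hrm : r ≤ m := by
        rw [hv2, repl_prefix_append_cons hb] at hpre
        exact (repl_prefix_replicate m).mp hpre
      have hsuft : List.replicate r a <:+ t := by
        rw [← List.reverse_prefix, List.reverse_replicate] at hsuf ⊢
        rw [hv2, List.reverse_append, List.reverse_cons, List.reverse_replicate,
          show t.reverse ++ [b] ++ List.replicate m a
            = t.reverse ++ b :: List.replicate m a from by simp] at hsuf
        exact (repl_prefix_append_cons hb _ _).mp hsuf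
      have hcnt_split : countOcc (List.replicate r a) v
          = (m + 1 - r) + countOcc (List.replicate r a) t := by
        rw [hv2, countOcc_append_cons hb hr, countOcc_replicate hr]
      obtain ⟨z, hz⟩ := id hsuft
      have hex : ∃ i, List.replicate r a <+: t.drop i :=
        ⟨z.length, by rw [← hz, List.drop_left]⟩
      set i₀ := Nat.find hex with hi0
      have hocc : List.replicate r a <+: t.drop i₀ := Nat.find_spec hex
      have hi0t : i₀ < t.length := by
        have h1 := hocc.length_le
        rw [List.length_drop, List.length_replicate] at h1
        omega
      set s := t.take i₀ with hs
      set t' := t.drop i₀ with ht'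
      have hst : s ++ t' = t := List.take_append_drop i₀ t
      have hslen : s.length = i₀ := by rw [hs, List.length_take]; omega
      have hct' : countOcc (List.replicate r a) t' = countOcc (List.replicate r a) t := by
        rw [← hst]
        symm
        apply countOcc_append_left_zero
        intro j hj
        rw [hst]
        exact Nat.find_min hex (by omega)
      have hpre' : List.replicate r a <+: t' := hocc
      have hsuf' : List.replicate r a <:+ t' := by
        have h1 : t' <:+ t := List.drop_suffix i₀ t
        rw [← List.reverse_prefix, List.reverse_replicate] at hsuft ⊢
        exact List.prefix_of_prefix_length_le hsuft (List.reverse_prefix.mpr h1)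
          (by simpa using hpre'.length_le)
      set k' := countOcc (List.replicate r a) t' with hk'
      have hk'pos : 1 ≤ k' := countOcc_pos hne_repl ⟨0, by simpa using hpre'⟩
      have hkk : k = (m + 1 - r) + k' := by rw [← hcnt, hcnt_split, hct']
      have ht'len : t'.length ≤ n := by
        have h1 : t'.length ≤ t.length := by rw [ht']; simp
        have h2 : v.length = m + 1 + t.length := by rw [hv2]; simp; omega
        omega
      obtain ⟨ks', hne', hlen', hge', hsum', hmem'⟩ :=
        ih t' ht'len k' hk'pos hk'.symm hpre' hsuf'
      have hbt : b :: t = (b :: s) ++ t' := by rw [List.cons_append, hst]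
      have hbs : (b :: s) ∈ wedge a r := by
        rcases eq_or_ne s [] with hse | hse
        · rw [hse]
          exact Set.mem_union_left _ ⟨b, hb, rfl⟩
        · set c := s.getLast hse with hcdef
          have hsc : s.dropLast ++ [c] = s := List.dropLast_append_getLast hse
          have hi0pos : 1 ≤ i₀ := by
            rcases Nat.eq_zero_or_pos i₀ with h0 | h0
            · exfalso; apply hse
              rw [hs, h0, List.take_zero]
            · exact h0
          have hdroplen : s.dropLast.length = i₀ - 1 := by
            rw [List.length_dropLast, hslen]
          have hc : c ≠ a := by
            intro hca
            have hdt : t.drop (i₀ - 1) = c :: t' := by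
              rw [← hst, ← hsc,
                show s.dropLast ++ [c] ++ t' = s.dropLast ++ c :: t' from by simp,
                ← hdroplen, List.drop_left]
            apply Nat.find_min hex (show i₀ - 1 < i₀ from by omega)
            rw [hdt, hca]
            obtain ⟨q, hq⟩ := hpre'
            rw [← hq, show a :: (List.replicate r a ++ q)
                = List.replicate (r + 1) a ++ q from by simp [List.replicate_succ]]
            exact ((repl_prefix_replicate (r + 1)).mpr (by omega)).trans
              (List.prefix_append _ _)
          have hu0 : countOcc (List.replicate r a) s.dropLast = 0 := by
            rw [countOcc_eq_zero_iff hne_repl]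
            intro j hj
            have hjl := hj.length_le
            rw [List.length_drop, List.length_replicate] at hjl
            have hjlt2 : j < i₀ := by omega
            have hpref : s.dropLast <+: t :=
              (List.dropLast_prefix s).trans (hs ▸ List.take_prefix i₀ t)
            exact Nat.find_min hex hjlt2 (hj.trans (hpref.drop j))
          apply Set.mem_union_right
          change (b :: s) ∈ (buffer a * Count (List.replicate r a) 0 * buffer a : Language α)
          rw [Language.mem_mul]
          refine ⟨[b] ++ s.dropLast, ?_, [c], ⟨c, hc, rfl⟩, ?_⟩
          · rw [Language.mem_mul]
            exact ⟨[b], ⟨b, hb, rfl⟩, s.dropLast, hu0, rfl⟩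
          · rw [List.append_assoc, hsc]
            rfl
      refine ⟨m :: ks', by simp, ?_, ?_, ?_, ?_⟩
      · simp only [List.length_cons]; omega
      · intro x hx
        rcases List.mem_cons.mp hx with rfl | hx
        · exact hrm
        · exact hge' x hx
      · simp only [List.sum_cons, List.length_cons, hsum']
        rw [Nat.mul_add, Nat.mul_one]
        generalize (r - 1) * ks'.length = G
        omega
      · cases ks' with
        | nil => exact absurd rfl hne'
        | cons q qs =>
          rw [altLang_cons, Language.mem_mul]
          refine ⟨List.replicate m a ++ (b :: s), ?_, t', hmem', ?_⟩
          · rw [Language.mem_mul]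
            exact ⟨List.replicate m a, rfl, b :: s, hbs, rfl⟩
          · rw [hv2, hbt, List.append_assoc]

end Stmt8Aux

open Stmt8Aux

theorem stmt8 {α : Type*} [DecidableEq α] (a : α) (hA : ∃ b : α, b ≠ a)
    (r k : ℕ) (hr : 1 ≤ r) (hk : 1 ≤ k) :
    CountPS (List.replicate r a) k
      = ⨆ ks ∈ {ks : List ℕ | 1 ≤ ks.length ∧ ks.length ≤ k ∧ (∀ x ∈ ks, r ≤ x) ∧
            ks.sum = k + (r - 1) * ks.length},
          altLang a (wedge a r) ks := by
  ext v
  simp only [CountPS, Set.mem_setOf_eq, Language.mem_iSup]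
  constructor
  · rintro ⟨hcnt, hpre, hsuf⟩
    obtain ⟨ks, hne, hlen, hge, hsum, hmem⟩ :=
      subset_altLang hr v.length v le_rfl k hk hcnt hpre hsuf
    exact ⟨ks, ⟨List.length_pos_iff.mpr hne, hlen, hge, hsum⟩, hmem⟩
  · rintro ⟨ks, ⟨h1, h2, h3, h4⟩, hmem⟩
    obtain ⟨hc, hp, hs⟩ := altLang_subset hr ks (List.length_pos_iff.mp h1) h3 v hmem
    refine ⟨?_, hp, hs⟩
    rw [h4] at hc
    generalize (r - 1) * ks.length = G at hc
    omega
end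

section
/- Let A be an alphabet with at least two letters, a ∈ A, B = A \ {a}, r ≥ 1, k ≥ 1. Then the language Count(a^r, k) = { v : |v|_{a^r} = k } equals [ε ∪ (Count(a^r,0) · B)] · CountPS(a^r, k) · [(B · Count(a^r,0)) ∪ ε]. -/
set_option linter.unusedSectionVars false

section helpers
variable {α : Type*} [DecidableEq α]

lemma countOcc_nil {w : List α} (hw : w ≠ []) : countOcc w [] = 0 := by
  simp [countOcc, List.prefix_nil, hw]

lemma countOcc_cons (w : List α) (c : α) (v : List α) :
    countOcc w (c :: v) = (if w <+: (c :: v) then 1 else 0) + countOcc w v := by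
  simp only [countOcc, List.length_cons]
  rw [List.range_succ_eq_map, List.filter_cons]
  by_cases h : w <+: c :: v <;>
    simp [h, List.filter_map, Function.comp_def, Nat.add_comm]

lemma not_prefix_of_short {a b : α} (hb : b ≠ a) {r : ℕ} {x y : List α}
    (hx : x.length < r) : ¬ List.replicate r a <+: x ++ b :: y := by
  intro h
  have hlen : (List.replicate r a).length = r := List.length_replicate
  have heq : List.replicate r a = (x ++ b :: y).take r := by
    have := List.prefix_iff_eq_take.mp h
    rwa [hlen] at this
  have hmem : b ∈ (x ++ b :: y).take r := by
    have h1 : r = x.length + (r - x.length) := by omega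
    rw [h1, List.take_append]
    have : r - x.length ≥ 1 := by omega
    rcases Nat.exists_eq_add_of_le this with ⟨n, hn⟩
    rw [hn, Nat.add_comm 1 n]
    rw [show x.length + (n + 1) - x.length = n + 1 by omega, List.take_succ_cons]
    simp
  rw [← heq] at hmem
  exact hb (List.eq_of_mem_replicate hmem)

lemma occ_bound {w : List α} (hw : w ≠ []) {v : List α} {i : ℕ} (h : w <+: v.drop i) :
    i + w.length ≤ v.length := by
  have h1 := h.length_le
  rw [List.length_drop] at h1
  have h2 : 1 ≤ w.length := List.length_pos_iff.mpr hw
  omega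

lemma countOcc_eq_zero_iff {w : List α} (hw : w ≠ []) (v : List α) :
    countOcc w v = 0 ↔ ∀ i, ¬ w <+: v.drop i := by
  rw [countOcc, List.length_eq_zero_iff, List.filter_eq_nil_iff]
  constructor
  · intro h i hp
    have hb := occ_bound hw hp
    have := h i (List.mem_range.mpr (by omega))
    simp at this
    exact this hp
  · intro h i _; simpa using h i

lemma exists_occ_of_countOcc_ne_zero {w v : List α} (hw : w ≠ []) (h : countOcc w v ≠ 0) :
    ∃ i, w <+: v.drop i := by
  by_contra hc; push_neg at hc
  exact h ((countOcc_eq_zero_iff hw v).mpr hc)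

lemma countOcc_split {a b : α} (hb : b ≠ a) {r : ℕ} (hr : 1 ≤ r) (u v : List α) :
    countOcc (List.replicate r a) (u ++ b :: v)
      = countOcc (List.replicate r a) u + countOcc (List.replicate r a) v := by
  have hw : List.replicate r a ≠ [] := by
    intro h
    have := congrArg List.length h
    simp at this; omega
  induction u with
  | nil =>
    simp only [List.nil_append]
    rw [countOcc_cons, countOcc_nil hw, if_neg]
    intro hp
    exact not_prefix_of_short hb (show ([] : List α).length < r by simp only [List.length_nil]; omega)
      (by simpa using hp)
  | cons c u ih =>
    rw [List.cons_append, countOcc_cons, countOcc_cons, ih]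
    have hiff : (List.replicate r a <+: c :: (u ++ b :: v)) ↔ (List.replicate r a <+: c :: u) := by
      constructor
      · intro h
        rcases le_or_gt r (u.length + 1) with hle | hlt
        · rw [List.prefix_iff_eq_take] at h ⊢
          rw [List.length_replicate] at h ⊢
          rw [h, show (c :: (u ++ b :: v)) = (c :: u) ++ (b :: v) from rfl,
            List.take_append_of_le_length (by simpa using hle)]
        · exact absurd h (not_prefix_of_short hb (x := c :: u) (y := v) (by simpa using hlt))
      · intro h
        exact h.trans (by
          rw [show (c :: (u ++ b :: v)) = (c :: u) ++ (b :: v) from rfl]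
          exact List.prefix_append _ _)
    simp only [hiff]; ring

end helpers

theorem stmt9 {α : Type*} [DecidableEq α] (a : α) (hA : ∃ b : α, b ≠ a)
    (r k : ℕ) (hr : 1 ≤ r) (hk : 1 ≤ k) :
    Count (List.replicate r a) k
      = (1 ⊔ Count (List.replicate r a) 0 * buffer a)
          * CountPS (List.replicate r a) k
          * (buffer a * Count (List.replicate r a) 0 ⊔ 1) := by
  set w : List α := List.replicate r a with hwdef
  have hlw : w.length = r := List.length_replicate
  have hw : w ≠ [] := by
    intro h; have := congrArg List.length h; rw [hlw] at this; simp at this; omega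
  have wsplit : ∀ (b : α), b ≠ a → ∀ u u' : List α,
      countOcc w (u ++ b :: u') = countOcc w u + countOcc w u' := by
    intro b hb u u'
    rw [hwdef]
    exact countOcc_split hb hr u u'
  ext v
  constructor
  · -- forward direction
    intro hv
    have hv : countOcc w v = k := hv
    have hex : ∃ i, w <+: v.drop i := exists_occ_of_countOcc_ne_zero hw (by omega)
    set i0 := Nat.find hex with hi0def
    have hP0 : w <+: v.drop i0 := Nat.find_spec hex
    have hmin : ∀ j, j < i0 → ¬ w <+: v.drop j := fun j hj => Nat.find_min hex hj
    set i1 := Nat.findGreatest (fun i => w <+: v.drop i) v.length with hi1def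
    have hb0 : i0 + r ≤ v.length := by have := occ_bound hw hP0; omega
    have hP1 : w <+: v.drop i1 := by
      exact Nat.findGreatest_spec (P := fun i => w <+: v.drop i) (m := i0) (n := v.length) (by omega) hP0
    have hb1 : i1 + r ≤ v.length := by have := occ_bound hw hP1; omega
    have hmax : ∀ j, i1 < j → ¬ w <+: v.drop j := by
      intro j hj hp
      have hjb := occ_bound hw hp
      exact Nat.findGreatest_is_greatest (P := fun i => w <+: List.drop i v) (n := v.length) (k := j) hj (by omega) hp
    have h01 : i0 ≤ i1 := Nat.find_min' hex hP1
    -- the middle word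
    set m := (v.drop i0).take (i1 + r - i0) with hmdef
    set s := v.drop (i1 + r) with hsdef
    have hms_eq : m ++ s = v.drop i0 := by
      have hs2 : s = (v.drop i0).drop (i1 + r - i0) := by
        rw [List.drop_drop, hsdef]
        congr 1
        omega
      rw [hmdef, hs2, List.take_append_drop]
    -- m has w as prefix
    have hm_pre : w <+: m := by
      rw [List.prefix_iff_eq_take, hlw]
      have h1 := List.prefix_iff_eq_take.mp hP0
      rw [hlw] at h1
      rw [hmdef, List.take_take, show min r (i1 + r - i0) = r by omega]
      exact h1
    -- m has w as suffix
    have hm_suf : w <:+ m := by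
      have key : m.drop (i1 - i0) = w := by
        rw [hmdef, List.drop_take, List.drop_drop,
          show i0 + (i1 - i0) = i1 by omega, show i1 + r - i0 - (i1 - i0) = r by omega]
        have h1 := List.prefix_iff_eq_take.mp hP1
        rw [hlw] at h1
        exact h1.symm
      exact key ▸ List.drop_suffix _ _
    have hvsplit : v = v.take i0 ++ (m ++ s) := by
      rw [hms_eq, List.take_append_drop]
    -- count in m ++ s is k
    have hms_cnt : countOcc w (m ++ s) = k := by
      by_cases h0 : i0 = 0
      · rw [hms_eq, h0, List.drop_zero]; exact hv
      · have hi0len : i0 - 1 < v.length := by omega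
        have htake : v.take i0 = v.take (i0 - 1) ++ [v[i0 - 1]] := by
          conv_lhs => rw [show i0 = (i0 - 1) + 1 by omega]
          rw [List.take_succ, List.getElem?_eq_getElem hi0len]
          rfl
        have hbne : v[i0 - 1] ≠ a := by
          intro hba
          apply hmin (i0 - 1) (by omega)
          have hdrop : v.drop (i0 - 1) = v[i0 - 1] :: v.drop i0 := by
            rw [List.drop_eq_getElem_cons hi0len, show i0 - 1 + 1 = i0 by omega]
          rw [hdrop, hba]
          have hwa : w <+: a :: w := by
            refine ⟨[a], ?_⟩
            rw [hwdef, ← List.replicate_succ, List.replicate_succ']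
          exact hwa.trans (List.cons_prefix_cons.mpr ⟨rfl, hP0⟩)
        have hq0 : countOcc w (v.take (i0 - 1)) = 0 := by
          rw [countOcc_eq_zero_iff hw]
          intro i hp
          have hbnd := occ_bound hw hp
          rw [hlw, List.length_take] at hbnd
          apply hmin i (by omega)
          have : (v.take (i0 - 1)).drop i <+: v.drop i := by
            rw [List.drop_take]
            exact List.take_prefix _ _
          exact hp.trans this
        have heq2 : countOcc w v = countOcc w (v.take (i0 - 1)) + countOcc w (m ++ s) := by
          rw [← wsplit _ hbne]
          congr 1
          conv_lhs => rw [hvsplit]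
          rw [htake, List.append_assoc, List.singleton_append]
        omega
    -- membership of the left part
    have hx_mem : v.take i0 ∈ (1 ⊔ Count w 0 * buffer a) := by
      by_cases h0 : i0 = 0
      · exact Set.mem_union_left _ ((Language.mem_one _).mpr (by rw [h0, List.take_zero]))
      · apply Set.mem_union_right
        have hi0len : i0 - 1 < v.length := by omega
        have htake : v.take i0 = v.take (i0 - 1) ++ [v[i0 - 1]] := by
          conv_lhs => rw [show i0 = (i0 - 1) + 1 by omega]
          rw [List.take_succ, List.getElem?_eq_getElem hi0len]
          rfl
        have hbne : v[i0 - 1] ≠ a := by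
          intro hba
          apply hmin (i0 - 1) (by omega)
          have hdrop : v.drop (i0 - 1) = v[i0 - 1] :: v.drop i0 := by
            rw [List.drop_eq_getElem_cons hi0len, show i0 - 1 + 1 = i0 by omega]
          rw [hdrop, hba]
          have hwa : w <+: a :: w := by
            refine ⟨[a], ?_⟩
            rw [hwdef, ← List.replicate_succ, List.replicate_succ']
          exact hwa.trans (List.cons_prefix_cons.mpr ⟨rfl, hP0⟩)
        have hq0 : countOcc w (v.take (i0 - 1)) = 0 := by
          rw [countOcc_eq_zero_iff hw]
          intro i hp
          have hbnd := occ_bound hw hp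
          rw [hlw, List.length_take] at hbnd
          apply hmin i (by omega)
          have : (v.take (i0 - 1)).drop i <+: v.drop i := by
            rw [List.drop_take]
            exact List.take_prefix _ _
          exact hp.trans this
        exact Language.mem_mul.mpr ⟨v.take (i0 - 1), hq0, [v[i0 - 1]],
          ⟨v[i0 - 1], hbne, rfl⟩, htake.symm⟩
    -- now split on whether s is empty
    have hs_main : s ∈ (buffer a * Count w 0 ⊔ 1) ∧ countOcc w m = k := by
      by_cases hse : i1 + r = v.length
      · have hsnil : s = [] := by
          rw [hsdef, hse, List.drop_length]
        constructor
        · exact Set.mem_union_right _ ((Language.mem_one _).mpr hsnil)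
        · rw [← hms_cnt, hsnil, List.append_nil]
      · have hlt : i1 + r < v.length := lt_of_le_of_ne hb1 hse
        have hscons : s = v[i1 + r] :: v.drop (i1 + r + 1) := by
          rw [hsdef]
          exact List.drop_eq_getElem_cons hlt
        have hcomm : w ++ [a] = a :: w := by
          rw [hwdef, ← List.replicate_succ, List.replicate_succ']
        have hbne' : v[i1 + r] ≠ a := by
          intro hba
          apply hmax (i1 + 1) (by omega)
          obtain ⟨u, hu⟩ := hP1
          have hu2 : u = v.drop (i1 + r) := by
            have h2 := congrArg (List.drop r) hu
            rw [show r = w.length from hlw.symm, List.drop_left, List.drop_drop] at h2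
            rw [h2, hlw]
          have hu3 : u = a :: v.drop (i1 + r + 1) := by
            rw [hu2, ← hsdef, hscons, hba]
          have hd1 : v.drop i1 = a :: (w ++ v.drop (i1 + r + 1)) := by
            rw [← hu, hu3, show w ++ (a :: v.drop (i1 + r + 1))
              = (w ++ [a]) ++ v.drop (i1 + r + 1) by simp, hcomm, List.cons_append]
          have hd2 : v.drop (i1 + 1) = w ++ v.drop (i1 + r + 1) := by
            have h3 : (v.drop i1).drop 1 = v.drop (i1 + 1) := by
              rw [List.drop_drop]
            rw [← h3, hd1, List.drop_succ_cons, List.drop_zero]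
          rw [hd2]
          exact List.prefix_append _ _
        have ht0 : countOcc w (v.drop (i1 + r + 1)) = 0 := by
          rw [countOcc_eq_zero_iff hw]
          intro i hp
          rw [List.drop_drop] at hp
          exact hmax _ (by omega) hp
        constructor
        · apply Set.mem_union_left
          exact Language.mem_mul.mpr ⟨[v[i1 + r]], ⟨v[i1 + r], hbne', rfl⟩,
            v.drop (i1 + r + 1), ht0, by rw [List.singleton_append, ← hscons]⟩
        · rw [hscons, wsplit _ hbne'] at hms_cnt
          omega
    refine Language.mem_mul.mpr ⟨v.take i0 ++ m, ?_, s, hs_main.1, ?_⟩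
    · exact Language.mem_mul.mpr ⟨v.take i0, hx_mem, m, ⟨hs_main.2, hm_pre, hm_suf⟩, rfl⟩
    · rw [List.append_assoc, ← hvsplit]
  · -- backward direction
    intro hv
    obtain ⟨xy, hxy, z, hz, hxyz⟩ := Language.mem_mul.mp hv
    obtain ⟨x, hx, y, hy, hxy2⟩ := Language.mem_mul.mp hxy
    have hyc : countOcc w y = k := hy.1
    have hxc : x = [] ∨ ∃ q b, b ≠ a ∧ countOcc w q = 0 ∧ x = q ++ [b] := by
      rcases hx with hx | hx
      · exact Or.inl ((Language.mem_one _).mp hx)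
      · obtain ⟨q, hq, bb, ⟨b, hbne, hbeq⟩, hqb⟩ := Language.mem_mul.mp hx
        exact Or.inr ⟨q, b, hbne, hq, by rw [← hqb, hbeq]⟩
    have hzc : z = [] ∨ ∃ b t, b ≠ a ∧ countOcc w t = 0 ∧ z = b :: t := by
      rcases hz with hz | hz
      · obtain ⟨bb, ⟨b, hbne, hbeq⟩, t, ht, hbt⟩ := Language.mem_mul.mp hz
        exact Or.inr ⟨b, t, hbne, ht, by rw [← hbt, hbeq, List.singleton_append]⟩
      · exact Or.inl ((Language.mem_one _).mp hz)
    show countOcc w v = k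
    subst hxyz
    subst hxy2
    rcases hxc with rfl | ⟨q, b, hbne, hq0, rfl⟩ <;>
      rcases hzc with rfl | ⟨b', t, hbne', ht0, rfl⟩
    · simpa using hyc
    · rw [List.nil_append, wsplit _ hbne']
      omega
    · rw [List.append_nil, show q ++ [b] ++ y = q ++ b :: y by simp, wsplit _ hbne]
      omega
    · rw [show q ++ [b] ++ y ++ b' :: t = q ++ b :: (y ++ b' :: t) by simp,
        wsplit _ hbne, wsplit _ hbne']
      omega
end
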